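/- Let N ≥ 1 and d ≥ 2N − 1 be integers. Let p_1, …, p_N ∈ ℂ⁴, p_i = (X0_i, X1_i, Y0_i, Y1_i), with (X0_i, X1_i) ≠ (0,0), (Y0_i, Y1_i) ≠ (0,0) for all i, and with the classes [Y0_i : Y1_i] ∈ P¹ pairwise distinct (so the points lie on N distinct lines of the ruling of P¹×P¹). Then the ℂ-subspace {f ∈ W_d : f is singular at p_1, …, p_N} has dimension 4(d+1) − 3N; that is, being singular at the N points imposes exactly 3N independent linear conditions on W_d. -/

import Mathlib

open MvPolynomial ComplexConjugate

noncomputable section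

/-- Weights recording the degree in the variables `x₀, x₁` on `ℂ[x₀,x₁,y₀,y₁]`. -/
def wx : Fin 4 → ℕ := ![1, 1, 0, 0]

/-- Weights recording the degree in the variables `y₀, y₁` on `ℂ[x₀,x₁,y₀,y₁]`. -/
def wy : Fin 4 → ℕ := ![0, 0, 1, 1]

/-- `W_d`: the space of bihomogeneous polynomials of bidegree `(3, d)` in `ℂ[x₀,x₁,y₀,y₁]`,
i.e. the space of global sections of `O(3,d)` on `ℙ¹ × ℙ¹ ≅ 𝔽₀`. -/
def W (d : ℕ) : Submodule ℂ (MvPolynomial (Fin 4) ℂ) :=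
  weightedHomogeneousSubmodule ℂ wx 3 ⊓ weightedHomogeneousSubmodule ℂ wy d

/-- `f` is singular at the point `p`: all partial derivatives of `f` vanish at `p`. -/
def SingularAt {σ : Type*} (f : MvPolynomial σ ℂ) (p : σ → ℂ) : Prop :=
  ∀ i, eval p (pderiv i f) = 0

/-- The subspace of polynomials singular at every point of the family `p`. -/
def singSub {ι σ : Type*} (p : ι → σ → ℂ) : Submodule ℂ (MvPolynomial σ ℂ) where
  carrier := {f | ∀ j, SingularAt f (p j)}
  zero_mem' := by intro j i; simp
  add_mem' := by
    intro f g hf hg j i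
    simp [map_add, hf j i, hg j i]
  smul_mem' := by
    intro c f hf j i
    simp [smul_eq_C_mul, pderiv_C_mul, hf j i]



namespace SingAux

lemma key_nonzero {z w : ℂ} (h : (z, w) ≠ ((0:ℂ), (0:ℂ))) :
    conj z * z + conj w * w ≠ 0 := by
  have hz : conj z * z = (Complex.normSq z : ℂ) := by
    rw [mul_comm]; exact Complex.mul_conj z
  have hw : conj w * w = (Complex.normSq w : ℂ) := by
    rw [mul_comm]; exact Complex.mul_conj w
  rw [hz, hw, ← Complex.ofReal_add]
  intro hc
  rw [Complex.ofReal_eq_zero] at hc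
  have h1 : Complex.normSq z = 0 ∧ Complex.normSq w = 0 := by
    constructor <;> nlinarith [Complex.normSq_nonneg z, Complex.normSq_nonneg w]
  exact h (by simp [Prod.ext_iff, ← Complex.normSq_eq_zero, h1.1, h1.2])

lemma solve2 {z w a b : ℂ} (h : (z, w) ≠ ((0:ℂ), (0:ℂ)))
    (h1 : z * a + w * b = 0) (h2 : conj w * a - conj z * b = 0) :
    a = 0 ∧ b = 0 := by
  have hk := key_nonzero h
  constructor
  · have : (conj z * z + conj w * w) * a = conj z * (z * a + w * b) + w * (conj w * a - conj z * b) := by ring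
    rw [h1, h2] at this
    simpa [hk] using (by simpa using this : (conj z * z + conj w * w) * a = 0)
  · have : (conj z * z + conj w * w) * b = conj w * (z * a + w * b) - z * (conj w * a - conj z * b) := by ring
    rw [h1, h2] at this
    simpa [hk] using (by simpa using this : (conj z * z + conj w * w) * b = 0)

/-- evaluation of a partial derivative -/
def ep (q : Fin 4 → ℂ) (i : Fin 4) (f : MvPolynomial (Fin 4) ℂ) : ℂ :=
  eval q (pderiv i f)

lemma ep_mul (q : Fin 4 → ℂ) (i : Fin 4) (f g : MvPolynomial (Fin 4) ℂ) :
    ep q i (f * g) = ep q i f * eval q g + eval q f * ep q i g := by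
  simp [ep, pderiv_mul, add_comm]; ring

lemma ep_pow (q : Fin 4 → ℂ) (i : Fin 4) (f : MvPolynomial (Fin 4) ℂ) (n : ℕ) :
    ep q i (f ^ n) = n * eval q f ^ (n - 1) * ep q i f := by
  simp [ep, pderiv_pow]; ring

lemma ep_add (q : Fin 4 → ℂ) (i : Fin 4) (f g : MvPolynomial (Fin 4) ℂ) :
    ep q i (f + g) = ep q i f + ep q i g := by simp [ep]

lemma ep_smul (q : Fin 4 → ℂ) (i : Fin 4) (c : ℂ) (f : MvPolynomial (Fin 4) ℂ) :
    ep q i (c • f) = c * ep q i f := by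
  simp [ep, smul_eq_C_mul, pderiv_C_mul]

lemma ep_zero (q : Fin 4 → ℂ) (i : Fin 4) : ep q i (0 : MvPolynomial (Fin 4) ℂ) = 0 := by
  simp [ep]

lemma ep_C_mul (q : Fin 4 → ℂ) (i : Fin 4) (c : ℂ) (f : MvPolynomial (Fin 4) ℂ) :
    ep q i (C c * f) = c * ep q i f := by
  simp [ep, pderiv_C_mul]

/-- linear form `a * X i0 + b * X i1` -/
def lf (a b : ℂ) (i0 i1 : Fin 4) : MvPolynomial (Fin 4) ℂ := C a * X i0 + C b * X i1

lemma eval_lf (q : Fin 4 → ℂ) (a b : ℂ) (i0 i1 : Fin 4) :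
    eval q (lf a b i0 i1) = a * q i0 + b * q i1 := by simp [lf]

lemma pderiv_lf (k : Fin 4) (a b : ℂ) (i0 i1 : Fin 4) :
    pderiv k (lf a b i0 i1) =
      C a * (if i0 = k then 1 else 0) + C b * (if i1 = k then 1 else 0) := by
  simp only [lf, map_add, pderiv_C_mul]
  congr 1 <;> [skip; skip] <;> congr 1 <;>
    · split
      · subst ‹_›; exact pderiv_X_self _
      · exact pderiv_X_of_ne ‹_›

lemma ep_lf (q : Fin 4 → ℂ) (k : Fin 4) (a b : ℂ) (i0 i1 : Fin 4) :
    ep q k (lf a b i0 i1) =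
      a * (if i0 = k then 1 else 0) + b * (if i1 = k then 1 else 0) := by
  rw [ep, pderiv_lf]
  split <;> split <;> simp


lemma weight_eq_sum (w : Fin 4 → ℕ) (m : Fin 4 →₀ ℕ) :
    Finsupp.weight w m = ∑ i, m i * w i := by
  rw [Finsupp.weight_apply, Finsupp.sum_fintype]
  · simp [smul_eq_mul]
  · intro i; simp

lemma weight_wx (m : Fin 4 →₀ ℕ) : Finsupp.weight wx m = m 0 + m 1 := by
  rw [weight_eq_sum, Fin.sum_univ_four]
  simp [wx]

lemma weight_wy (m : Fin 4 →₀ ℕ) : Finsupp.weight wy m = m 2 + m 3 := by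
  rw [weight_eq_sum, Fin.sum_univ_four]
  simp [wy]

/-- exponent of the basis monomial indexed by `(i,j)` -/
def mexp (d : ℕ) (i : Fin 4) (j : Fin (d+1)) : Fin 4 →₀ ℕ :=
  Finsupp.equivFunOnFinite.symm ![i.val, 3 - i.val, j.val, d - j.val]

lemma mexp_apply (d : ℕ) (i : Fin 4) (j : Fin (d+1)) (k : Fin 4) :
    mexp d i j k = ![i.val, 3 - i.val, j.val, d - j.val] k := rfl

/-- the basis monomials of `W d` -/
def bmon (d : ℕ) (ij : Fin 4 × Fin (d+1)) : MvPolynomial (Fin 4) ℂ :=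
  monomial (mexp d ij.1 ij.2) 1

lemma bmon_mem (d : ℕ) (ij : Fin 4 × Fin (d+1)) : bmon d ij ∈ W d := by
  obtain ⟨i, j⟩ := ij
  constructor <;>
  · apply isWeightedHomogeneous_monomial
    first
      | (rw [weight_wx, mexp_apply, mexp_apply]
         show i.val + (3 - i.val) = 3
         omega)
      | (rw [weight_wy, mexp_apply, mexp_apply]
         show j.val + (d - j.val) = d
         omega)

lemma mexp_injective (d : ℕ) : Function.Injective
    (fun ij : Fin 4 × Fin (d+1) => mexp d ij.1 ij.2) := by
  rintro ⟨i, j⟩ ⟨i', j'⟩ h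
  have h0 := DFunLike.congr_fun h 0
  have h2 := DFunLike.congr_fun h 2
  simp only [mexp_apply] at h0 h2
  simp only [Matrix.cons_val_zero] at h0
  have h2' : j.val = j'.val := by simpa using h2
  ext
  · exact h0
  · exact h2'

lemma linindep_bmon (d : ℕ) : LinearIndependent ℂ (bmon d) := by
  have h := (MvPolynomial.basisMonomials (Fin 4) ℂ).linearIndependent.comp
    (fun ij : Fin 4 × Fin (d+1) => mexp d ij.1 ij.2) (mexp_injective d)
  have he : bmon d = (MvPolynomial.basisMonomials (Fin 4) ℂ) ∘
      fun ij : Fin 4 × Fin (d+1) => mexp d ij.1 ij.2 := by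
    funext ij
    simp [bmon, MvPolynomial.coe_basisMonomials, Function.comp]
  rw [he]
  exact h

lemma W_eq_span (d : ℕ) : W d = Submodule.span ℂ (Set.range (bmon d)) := by
  apply le_antisymm
  · intro f hf
    obtain ⟨hfx, hfy⟩ := hf
    rw [f.as_sum]
    apply Submodule.sum_mem
    intro m hm
    have hc : coeff m f ≠ 0 := mem_support_iff.mp hm
    have hx := hfx hc
    have hy := hfy hc
    rw [weight_wx] at hx
    rw [weight_wy] at hy
    have hi : m 0 < 4 := by omega
    have hj : m 2 < d + 1 := by omega
    have hm' : mexp d ⟨m 0, hi⟩ ⟨m 2, hj⟩ = m := by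
      ext k
      fin_cases k <;> simp [mexp_apply] <;> omega
    have : monomial m (coeff m f) = coeff m f • bmon d (⟨m 0, hi⟩, ⟨m 2, hj⟩) := by
      rw [bmon, hm', smul_monomial, smul_eq_mul, mul_one]
    rw [this]
    exact Submodule.smul_mem _ _ (Submodule.subset_span (Set.mem_range_self _))
  · rw [Submodule.span_le]
    rintro _ ⟨ij, rfl⟩
    exact bmon_mem d ij

instance Wfd (d : ℕ) : FiniteDimensional ℂ (W d) := by
  rw [W_eq_span]
  exact FiniteDimensional.span_of_finite ℂ (Set.finite_range _)

lemma finrank_W (d : ℕ) : Module.finrank ℂ (W d) = 4 * (d + 1) := by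
  rw [W_eq_span, finrank_span_eq_card (linindep_bmon d)]
  simp [Fintype.card_prod]

lemma mul_ep_monomial (q : Fin 4 → ℂ) (i : Fin 4) (m : Fin 4 →₀ ℕ) (c : ℂ) :
    q i * ep q i (monomial m c) = (m i : ℂ) * eval q (monomial m c) := by
  rcases Nat.eq_zero_or_pos (m i) with h | h
  · simp [ep, pderiv_monomial, h]
  · rw [ep, pderiv_monomial, eval_monomial, eval_monomial, Finsupp.prod_pow, Finsupp.prod_pow,
      Fin.prod_univ_four, Fin.prod_univ_four]
    fin_cases i <;>
      · simp only [Finsupp.tsub_apply]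
        simp (config := { decide := true }) only [Finsupp.single_apply, if_true, if_false,
          Nat.sub_zero]
        first
        | (obtain ⟨k, hk⟩ : ∃ k, m 0 = k + 1 := ⟨m 0 - 1, (Nat.succ_pred_eq_of_pos (by simpa using h)).symm⟩
           rw [hk]; simp only [Nat.add_sub_cancel]; push_cast; ring)
        | (obtain ⟨k, hk⟩ : ∃ k, m 1 = k + 1 := ⟨m 1 - 1, (Nat.succ_pred_eq_of_pos (by simpa using h)).symm⟩
           rw [hk]; simp only [Nat.add_sub_cancel]; push_cast; ring)
        | (obtain ⟨k, hk⟩ : ∃ k, m 2 = k + 1 := ⟨m 2 - 1, (Nat.succ_pred_eq_of_pos (by simpa using h)).symm⟩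
           rw [hk]; simp only [Nat.add_sub_cancel]; push_cast; ring)
        | (obtain ⟨k, hk⟩ : ∃ k, m 3 = k + 1 := ⟨m 3 - 1, (Nat.succ_pred_eq_of_pos (by simpa using h)).symm⟩
           rw [hk]; simp only [Nat.add_sub_cancel]; push_cast; ring)

lemma euler_x (d : ℕ) (q : Fin 4 → ℂ) {f : MvPolynomial (Fin 4) ℂ} (hf : f ∈ W d) :
    q 0 * ep q 0 f + q 1 * ep q 1 f = 3 * eval q f := by
  rw [W_eq_span] at hf
  induction hf using Submodule.span_induction with
  | mem g hg =>
    obtain ⟨⟨i, j⟩, rfl⟩ := hg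
    rw [bmon, mul_ep_monomial, mul_ep_monomial, ← add_mul]
    congr 1
    have h0 : (mexp d i j) 0 = i.val := rfl
    have h1 : (mexp d i j) 1 = 3 - i.val := rfl
    rw [h0, h1]
    have h3 : i.val + (3 - i.val) = 3 := by omega
    rw [← Nat.cast_add, h3]
    norm_num
  | zero => rw [ep_zero, ep_zero, map_zero]; ring
  | add g h _ _ hg hh =>
    simp only [ep_add, map_add]
    linear_combination hg + hh
  | smul c g _ hg =>
    simp only [smul_eq_C_mul, ep_C_mul, map_mul, eval_C]
    linear_combination c * hg

lemma euler_y (d : ℕ) (q : Fin 4 → ℂ) {f : MvPolynomial (Fin 4) ℂ} (hf : f ∈ W d) :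
    q 2 * ep q 2 f + q 3 * ep q 3 f = (d : ℂ) * eval q f := by
  rw [W_eq_span] at hf
  induction hf using Submodule.span_induction with
  | mem g hg =>
    obtain ⟨⟨i, j⟩, rfl⟩ := hg
    rw [bmon, mul_ep_monomial, mul_ep_monomial, ← add_mul]
    congr 1
    have h0 : (mexp d i j) 2 = j.val := rfl
    have h1 : (mexp d i j) 3 = d - j.val := rfl
    rw [h0, h1]
    have h3 : j.val + (d - j.val) = d := by omega
    rw [← Nat.cast_add, h3]
  | zero => rw [ep_zero, ep_zero, map_zero]; ring
  | add g h _ _ hg hh =>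
    simp only [ep_add, map_add]
    linear_combination hg + hh
  | smul c g _ hg =>
    simp only [smul_eq_C_mul, ep_C_mul, map_mul, eval_C]
    linear_combination c * hg

lemma singularAt_iff (d : ℕ) {f : MvPolynomial (Fin 4) ℂ} (hf : f ∈ W d) (q : Fin 4 → ℂ)
    (hqy : (q 2, q 3) ≠ ((0:ℂ), (0:ℂ))) :
    SingularAt f q ↔
      (ep q 0 f = 0 ∧ ep q 1 f = 0 ∧
        conj (q 3) * ep q 2 f - conj (q 2) * ep q 3 f = 0) := by
  constructor
  · intro h
    refine ⟨h 0, h 1, ?_⟩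
    rw [show ep q 2 f = eval q (pderiv 2 f) from rfl, show ep q 3 f = eval q (pderiv 3 f) from rfl,
      h 2, h 3]
    ring
  · rintro ⟨h0, h1, h3⟩
    have hev : eval q f = 0 := by
      have he := euler_x d q hf
      rw [h0, h1, mul_zero, mul_zero, add_zero] at he
      rcases mul_eq_zero.mp he.symm with h | h
      · norm_num at h
      · exact h
    have hey : q 2 * ep q 2 f + q 3 * ep q 3 f = 0 := by
      rw [euler_y d q hf, hev, mul_zero]
    obtain ⟨ha, hb⟩ := solve2 hqy hey h3
    intro i
    fin_cases i
    · exact h0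
    · exact h1
    · exact ha
    · exact hb


/-- the linear functional `f ↦ eval q (pderiv i f)` -/
def epL (q : Fin 4 → ℂ) (i : Fin 4) : MvPolynomial (Fin 4) ℂ →ₗ[ℂ] ℂ where
  toFun f := ep q i f
  map_add' f g := ep_add q i f g
  map_smul' c f := by simpa using ep_smul q i c f

/-- the three linear conditions at a point -/
def funcs {N : ℕ} (p : Fin N → Fin 4 → ℂ) (j : Fin N) :
    Fin 3 → (MvPolynomial (Fin 4) ℂ →ₗ[ℂ] ℂ) :=
  ![epL (p j) 0, epL (p j) 1, conj (p j 3) • epL (p j) 2 - conj (p j 2) • epL (p j) 3]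

def Lmap {N : ℕ} (p : Fin N → Fin 4 → ℂ) :
    MvPolynomial (Fin 4) ℂ →ₗ[ℂ] (Fin N → Fin 3 → ℂ) :=
  LinearMap.pi fun j => LinearMap.pi fun k => funcs p j k

variable {N : ℕ}

lemma Lmap_apply0 (p : Fin N → Fin 4 → ℂ) (f) (j) :
    Lmap p f j 0 = ep (p j) 0 f := rfl

lemma Lmap_apply1 (p : Fin N → Fin 4 → ℂ) (f) (j) :
    Lmap p f j 1 = ep (p j) 1 f := rfl

lemma Lmap_apply2 (p : Fin N → Fin 4 → ℂ) (f) (j) :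
    Lmap p f j 2 = conj (p j 3) * ep (p j) 2 f - conj (p j 2) * ep (p j) 3 f := rfl

lemma mem_singSub_iff (d : ℕ) (p : Fin N → Fin 4 → ℂ)
    (hpy : ∀ j, (p j 2, p j 3) ≠ ((0:ℂ), (0:ℂ)))
    {f : MvPolynomial (Fin 4) ℂ} (hf : f ∈ W d) :
    f ∈ singSub p ↔ Lmap p f = 0 := by
  have hmem : f ∈ singSub p ↔ ∀ j, SingularAt f (p j) := Iff.rfl
  rw [hmem]
  constructor
  · intro h
    funext j k
    have hj := (singularAt_iff d hf (p j) (hpy j)).mp (h j)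
    fin_cases k
    · exact hj.1
    · exact hj.2.1
    · exact hj.2.2
  · intro h j
    refine (singularAt_iff d hf (p j) (hpy j)).mpr ?_
    refine ⟨?_, ?_, ?_⟩
    · rw [← Lmap_apply0 p f j, h]; rfl
    · rw [← Lmap_apply1 p f j, h]; rfl
    · rw [← Lmap_apply2 p f j, h]; rfl

lemma inf_eq (d : ℕ) (p : Fin N → Fin 4 → ℂ)
    (hpy : ∀ j, (p j 2, p j 3) ≠ ((0:ℂ), (0:ℂ))) :
    W d ⊓ singSub p =
      Submodule.map (W d).subtype (LinearMap.ker (Lmap p ∘ₗ (W d).subtype)) := by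
  ext f
  simp only [Submodule.mem_inf, Submodule.mem_map, LinearMap.mem_ker, LinearMap.comp_apply,
    Submodule.coe_subtype]
  constructor
  · rintro ⟨hW, hs⟩
    exact ⟨⟨f, hW⟩, (mem_singSub_iff d p hpy hW).mp hs, rfl⟩
  · rintro ⟨⟨g, hg⟩, hker, rfl⟩
    exact ⟨hg, (mem_singSub_iff d p hpy hg).mpr hker⟩

/-- linear forms attached to a point -/
def lamF (q : Fin 4 → ℂ) : MvPolynomial (Fin 4) ℂ := lf (q 1) (-(q 0)) 0 1
def muF (q : Fin 4 → ℂ) : MvPolynomial (Fin 4) ℂ := lf (conj (q 0)) (conj (q 1)) 0 1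
def ellF (q : Fin 4 → ℂ) : MvPolynomial (Fin 4) ℂ := lf (q 3) (-(q 2)) 2 3
def mF (q : Fin 4 → ℂ) : MvPolynomial (Fin 4) ℂ := lf (conj (q 2)) (conj (q 3)) 2 3

lemma eval_ellF (q r : Fin 4 → ℂ) : eval r (ellF q) = q 3 * r 2 - q 2 * r 3 := by
  rw [ellF, eval_lf]; ring

lemma eval_lamF_self (r : Fin 4 → ℂ) : eval r (lamF r) = 0 := by rw [lamF, eval_lf]; ring
lemma eval_ellF_self (r : Fin 4 → ℂ) : eval r (ellF r) = 0 := by rw [ellF, eval_lf]; ring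
lemma eval_muF_self (r : Fin 4 → ℂ) :
    eval r (muF r) = conj (r 0) * r 0 + conj (r 1) * r 1 := by rw [muF, eval_lf]
lemma eval_mF_self (r : Fin 4 → ℂ) :
    eval r (mF r) = conj (r 2) * r 2 + conj (r 3) * r 3 := by rw [mF, eval_lf]

lemma ep_lamF_0 (r q : Fin 4 → ℂ) : ep r 0 (lamF q) = q 1 := by
  rw [lamF, ep_lf]
  simp (config := { decide := true }) only [if_true, if_false]
  ring

lemma ep_lamF_1 (r q : Fin 4 → ℂ) : ep r 1 (lamF q) = -(q 0) := by
  rw [lamF, ep_lf]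
  simp (config := { decide := true }) only [if_true, if_false]
  ring

lemma ep_lamF_2 (r q : Fin 4 → ℂ) : ep r 2 (lamF q) = 0 := by
  rw [lamF, ep_lf]
  simp (config := { decide := true }) only [if_true, if_false]
  ring

lemma ep_lamF_3 (r q : Fin 4 → ℂ) : ep r 3 (lamF q) = 0 := by
  rw [lamF, ep_lf]
  simp (config := { decide := true }) only [if_true, if_false]
  ring

lemma ep_muF_0 (r q : Fin 4 → ℂ) : ep r 0 (muF q) = conj (q 0) := by
  rw [muF, ep_lf]
  simp (config := { decide := true }) only [if_true, if_false]
  ring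

lemma ep_muF_1 (r q : Fin 4 → ℂ) : ep r 1 (muF q) = conj (q 1) := by
  rw [muF, ep_lf]
  simp (config := { decide := true }) only [if_true, if_false]
  ring

lemma ep_muF_2 (r q : Fin 4 → ℂ) : ep r 2 (muF q) = 0 := by
  rw [muF, ep_lf]
  simp (config := { decide := true }) only [if_true, if_false]
  ring

lemma ep_muF_3 (r q : Fin 4 → ℂ) : ep r 3 (muF q) = 0 := by
  rw [muF, ep_lf]
  simp (config := { decide := true }) only [if_true, if_false]
  ring

lemma ep_ellF_0 (r q : Fin 4 → ℂ) : ep r 0 (ellF q) = 0 := by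
  rw [ellF, ep_lf]
  simp (config := { decide := true }) only [if_true, if_false]
  ring

lemma ep_ellF_1 (r q : Fin 4 → ℂ) : ep r 1 (ellF q) = 0 := by
  rw [ellF, ep_lf]
  simp (config := { decide := true }) only [if_true, if_false]
  ring

lemma ep_ellF_2 (r q : Fin 4 → ℂ) : ep r 2 (ellF q) = q 3 := by
  rw [ellF, ep_lf]
  simp (config := { decide := true }) only [if_true, if_false]
  ring

lemma ep_ellF_3 (r q : Fin 4 → ℂ) : ep r 3 (ellF q) = -(q 2) := by
  rw [ellF, ep_lf]
  simp (config := { decide := true }) only [if_true, if_false]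
  ring

lemma ep_mF_0 (r q : Fin 4 → ℂ) : ep r 0 (mF q) = 0 := by
  rw [mF, ep_lf]
  simp (config := { decide := true }) only [if_true, if_false]
  ring

lemma ep_mF_1 (r q : Fin 4 → ℂ) : ep r 1 (mF q) = 0 := by
  rw [mF, ep_lf]
  simp (config := { decide := true }) only [if_true, if_false]
  ring

lemma ep_mF_2 (r q : Fin 4 → ℂ) : ep r 2 (mF q) = conj (q 2) := by
  rw [mF, ep_lf]
  simp (config := { decide := true }) only [if_true, if_false]
  ring

lemma ep_mF_3 (r q : Fin 4 → ℂ) : ep r 3 (mF q) = conj (q 3) := by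
  rw [mF, ep_lf]
  simp (config := { decide := true }) only [if_true, if_false]
  ring

lemma pderiv_lf_ne (k : Fin 4) (a b : ℂ) (i0 i1 : Fin 4) (h0 : i0 ≠ k) (h1 : i1 ≠ k) :
    pderiv k (lf a b i0 i1) = 0 := by
  rw [pderiv_lf, if_neg h0, if_neg h1]
  ring

lemma pderiv_pow_zero (k : Fin 4) (f : MvPolynomial (Fin 4) ℂ) (n : ℕ) (h : pderiv k f = 0) :
    pderiv k (f ^ n) = 0 := by
  rw [pderiv_pow, h]
  ring

lemma pderiv_prod_zero {ι : Type*} (s : Finset ι) (g : ι → MvPolynomial (Fin 4) ℂ) (k : Fin 4)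
    (h : ∀ i ∈ s, pderiv k (g i) = 0) : pderiv k (∏ i ∈ s, g i) = 0 := by
  refine Finset.prod_induction g (fun f => pderiv k f = 0) ?_ pderiv_one h
  intro a b ha hb
  rw [pderiv_mul, ha, hb]
  ring

/-- the product of squares of the ruling lines through the other points -/
def Qp {N : ℕ} (p : Fin N → Fin 4 → ℂ) (j : Fin N) : MvPolynomial (Fin 4) ℂ :=
  ∏ j' ∈ Finset.univ.erase j, (ellF (p j'))^2

lemma ep_Qp_zero0 {N : ℕ} (p : Fin N → Fin 4 → ℂ) (j : Fin N) (r : Fin 4 → ℂ) :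
    ep r 0 (Qp p j) = 0 := by
  have h : pderiv (0:Fin 4) (Qp p j) = 0 := by
    rw [Qp]
    apply pderiv_prod_zero
    intro i _
    apply pderiv_pow_zero
    rw [ellF]
    exact pderiv_lf_ne _ _ _ _ _ (by decide) (by decide)
  rw [ep, h, map_zero]

lemma ep_Qp_zero1 {N : ℕ} (p : Fin N → Fin 4 → ℂ) (j : Fin N) (r : Fin 4 → ℂ) :
    ep r 1 (Qp p j) = 0 := by
  have h : pderiv (1:Fin 4) (Qp p j) = 0 := by
    rw [Qp]
    apply pderiv_prod_zero
    intro i _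
    apply pderiv_pow_zero
    rw [ellF]
    exact pderiv_lf_ne _ _ _ _ _ (by decide) (by decide)
  rw [ep, h, map_zero]

lemma ep_sq_mul_zero (r : Fin 4 → ℂ) (i : Fin 4) (g h : MvPolynomial (Fin 4) ℂ)
    (hg : eval r g = 0) : ep r i (g^2 * h) = 0 := by
  simp [ep_mul, ep_pow, hg]

lemma ep_kill {N : ℕ} (p : Fin N → Fin 4 → ℂ) (j j' : Fin N) (hjj : j' ≠ j)
    (R : MvPolynomial (Fin 4) ℂ) (i : Fin 4) : ep (p j') i (Qp p j * R) = 0 := by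
  have hmem : j' ∈ Finset.univ.erase j := Finset.mem_erase.mpr ⟨hjj, Finset.mem_univ j'⟩
  rw [Qp, ← Finset.mul_prod_erase _ _ hmem, mul_assoc]
  exact ep_sq_mul_zero _ _ _ _ (eval_ellF_self (p j'))

lemma eval_Qp_ne {N : ℕ} (p : Fin N → Fin 4 → ℂ)
    (hdist : ∀ j j', j ≠ j' → p j 2 * p j' 3 ≠ p j' 2 * p j 3) (j : Fin N) :
    eval (p j) (Qp p j) ≠ 0 := by
  rw [Qp, map_prod]
  rw [Finset.prod_ne_zero_iff]
  intro j' hj'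
  have hne : j' ≠ j := (Finset.mem_erase.mp hj').1
  rw [map_pow]
  apply pow_ne_zero
  rw [eval_ellF]
  intro hc
  exact hdist j' j hne (by linear_combination -hc)

lemma lf_hom {w : Fin 4 → ℕ} (a b : ℂ) (i0 i1 : Fin 4) {k : ℕ} (h0 : w i0 = k) (h1 : w i1 = k) :
    IsWeightedHomogeneous w (lf a b i0 i1) k := by
  have hA : IsWeightedHomogeneous w (C a * X i0 : MvPolynomial (Fin 4) ℂ) k := by
    have := (isWeightedHomogeneous_C w a).mul (isWeightedHomogeneous_X ℂ w i0)
    rwa [zero_add, h0] at this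
  have hB : IsWeightedHomogeneous w (C b * X i1 : MvPolynomial (Fin 4) ℂ) k := by
    have := (isWeightedHomogeneous_C w b).mul (isWeightedHomogeneous_X ℂ w i1)
    rwa [zero_add, h1] at this
  exact hA.add hB

lemma IsWH_pow {w : Fin 4 → ℕ} {f : MvPolynomial (Fin 4) ℂ} {m : ℕ}
    (h : IsWeightedHomogeneous w f m) (n : ℕ) : IsWeightedHomogeneous w (f^n) (n*m) := by
  induction n with
  | zero => simpa using isWeightedHomogeneous_one ℂ w
  | succ n ih =>
    rw [pow_succ]
    have := ih.mul h
    rwa [show n*m + m = (n+1)*m by ring] at this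

lemma hom_lamF_x (q : Fin 4 → ℂ) : IsWeightedHomogeneous wx (lamF q) 1 :=
  lf_hom _ _ _ _ (by simp [wx]) (by simp [wx])
lemma hom_lamF_y (q : Fin 4 → ℂ) : IsWeightedHomogeneous wy (lamF q) 0 :=
  lf_hom _ _ _ _ (by simp [wy]) (by simp [wy])
lemma hom_muF_x (q : Fin 4 → ℂ) : IsWeightedHomogeneous wx (muF q) 1 :=
  lf_hom _ _ _ _ (by simp [wx]) (by simp [wx])
lemma hom_muF_y (q : Fin 4 → ℂ) : IsWeightedHomogeneous wy (muF q) 0 :=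
  lf_hom _ _ _ _ (by simp [wy]) (by simp [wy])
lemma hom_ellF_x (q : Fin 4 → ℂ) : IsWeightedHomogeneous wx (ellF q) 0 :=
  lf_hom _ _ _ _ (by simp [wx]) (by simp [wx])
lemma hom_ellF_y (q : Fin 4 → ℂ) : IsWeightedHomogeneous wy (ellF q) 1 :=
  lf_hom _ _ _ _ (by simp [wy]) (by simp [wy])
lemma hom_mF_x (q : Fin 4 → ℂ) : IsWeightedHomogeneous wx (mF q) 0 :=
  lf_hom _ _ _ _ (by simp [wx]) (by simp [wx])
lemma hom_mF_y (q : Fin 4 → ℂ) : IsWeightedHomogeneous wy (mF q) 1 :=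
  lf_hom _ _ _ _ (by simp [wy]) (by simp [wy])

lemma hom_Qp_x {N : ℕ} (p : Fin N → Fin 4 → ℂ) (j : Fin N) :
    IsWeightedHomogeneous wx (Qp p j) 0 := by
  have h := IsWeightedHomogeneous.prod (Finset.univ.erase j) (fun i => (ellF (p i))^2)
    (fun _ => 0) (w := wx) (fun i _ => by simpa using IsWH_pow (hom_ellF_x (p i)) 2)
  simpa [Qp] using h

lemma hom_Qp_y {N : ℕ} (p : Fin N → Fin 4 → ℂ) (j : Fin N) :
    IsWeightedHomogeneous wy (Qp p j) (2*(N-1)) := by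
  have h := IsWeightedHomogeneous.prod (Finset.univ.erase j) (fun i => (ellF (p i))^2)
    (fun _ => 2) (w := wy) (fun i _ => by simpa using IsWH_pow (hom_ellF_y (p i)) 2)
  have hcard : (Finset.univ.erase j).card = N - 1 := by
    rw [Finset.card_erase_of_mem (Finset.mem_univ j), Finset.card_univ, Fintype.card_fin]
  rw [Finset.sum_const, hcard, smul_eq_mul, mul_comm] at h
  exact h

/-- the three generators attached to the point `p j` -/
def G1 {N : ℕ} (p : Fin N → Fin 4 → ℂ) (j : Fin N) (e : ℕ) : MvPolynomial (Fin 4) ℂ :=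
  Qp p j * (lamF (p j) * ((muF (p j))^2 * (mF (p j))^e))
def G2 {N : ℕ} (p : Fin N → Fin 4 → ℂ) (j : Fin N) (e : ℕ) : MvPolynomial (Fin 4) ℂ :=
  Qp p j * ((muF (p j))^3 * (ellF (p j) * (mF (p j))^(e-1)))
def G3 {N : ℕ} (p : Fin N → Fin 4 → ℂ) (j : Fin N) (e : ℕ) : MvPolynomial (Fin 4) ℂ :=
  Qp p j * ((muF (p j))^3 * (mF (p j))^e)

lemma G1_mem {N d : ℕ} (p : Fin N → Fin 4 → ℂ) (j : Fin N) (e : ℕ) (he : 1 ≤ e)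
    (hde : 2*(N-1) + e = d) : G1 p j e ∈ W d := by
  constructor
  · have h := (hom_Qp_x p j).mul ((hom_lamF_x (p j)).mul
      ((IsWH_pow (hom_muF_x (p j)) 2).mul (IsWH_pow (hom_mF_x (p j)) e)))
    rwa [show 0 + (1 + (2*1 + e*0)) = 3 by ring] at h
  · have h := (hom_Qp_y p j).mul ((hom_lamF_y (p j)).mul
      ((IsWH_pow (hom_muF_y (p j)) 2).mul (IsWH_pow (hom_mF_y (p j)) e)))
    rwa [show 2*(N-1) + (0 + (2*0 + e*1)) = d by omega] at h

lemma G2_mem {N d : ℕ} (p : Fin N → Fin 4 → ℂ) (j : Fin N) (e : ℕ) (he : 1 ≤ e)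
    (hde : 2*(N-1) + e = d) : G2 p j e ∈ W d := by
  constructor
  · have h := (hom_Qp_x p j).mul ((IsWH_pow (hom_muF_x (p j)) 3).mul
      ((hom_ellF_x (p j)).mul (IsWH_pow (hom_mF_x (p j)) (e-1))))
    rwa [show 0 + (3*1 + (0 + (e-1)*0)) = 3 by ring] at h
  · have h := (hom_Qp_y p j).mul ((IsWH_pow (hom_muF_y (p j)) 3).mul
      ((hom_ellF_y (p j)).mul (IsWH_pow (hom_mF_y (p j)) (e-1))))
    rwa [show 2*(N-1) + (3*0 + (1 + (e-1)*1)) = d by omega] at h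

lemma G3_mem {N d : ℕ} (p : Fin N → Fin 4 → ℂ) (j : Fin N) (e : ℕ) (he : 1 ≤ e)
    (hde : 2*(N-1) + e = d) : G3 p j e ∈ W d := by
  constructor
  · have h := (hom_Qp_x p j).mul
      ((IsWH_pow (hom_muF_x (p j)) 3).mul (IsWH_pow (hom_mF_x (p j)) e))
    rwa [show 0 + (3*1 + e*0) = 3 by ring] at h
  · have h := (hom_Qp_y p j).mul
      ((IsWH_pow (hom_muF_y (p j)) 3).mul (IsWH_pow (hom_mF_y (p j)) e))
    rwa [show 2*(N-1) + (3*0 + e*1) = d by omega] at h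

lemma Lmap_apply_add {N : ℕ} (p : Fin N → Fin 4 → ℂ) (f g : MvPolynomial (Fin 4) ℂ)
    (j : Fin N) (k : Fin 3) : Lmap p (f + g) j k = Lmap p f j k + Lmap p g j k := by
  simp

lemma Lmap_apply_smul {N : ℕ} (p : Fin N → Fin 4 → ℂ) (c : ℂ) (f : MvPolynomial (Fin 4) ℂ)
    (j : Fin N) (k : Fin 3) : Lmap p (c • f) j k = c * Lmap p f j k := by
  simp

lemma Lmap_QpR_kill {N : ℕ} (p : Fin N → Fin 4 → ℂ) (j j' : Fin N) (hjj : j' ≠ j)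
    (R : MvPolynomial (Fin 4) ℂ) (k : Fin 3) : Lmap p (Qp p j * R) j' k = 0 := by
  have h0 := Lmap_apply0 p (Qp p j * R) j'
  have h1 := Lmap_apply1 p (Qp p j * R) j'
  have h2 := Lmap_apply2 p (Qp p j * R) j'
  rw [ep_kill p j j' hjj R 0] at h0
  rw [ep_kill p j j' hjj R 1] at h1
  rw [ep_kill p j j' hjj R 2, ep_kill p j j' hjj R 3] at h2
  fin_cases k
  · exact h0
  · exact h1
  · simpa using h2

lemma LG1_0 {N : ℕ} (p : Fin N → Fin 4 → ℂ) (j : Fin N) (e : ℕ) :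
    Lmap p (G1 p j e) j 0 =
      (eval (p j) (Qp p j) * (eval (p j) (muF (p j)))^2 * (eval (p j) (mF (p j)))^e) * p j 1 := by
  rw [Lmap_apply0]
  simp only [G1, ep_mul, ep_pow, map_mul, map_pow, eval_lamF_self, ep_Qp_zero0,
    ep_lamF_0, ep_muF_0, ep_mF_0]
  ring

lemma LG1_1 {N : ℕ} (p : Fin N → Fin 4 → ℂ) (j : Fin N) (e : ℕ) :
    Lmap p (G1 p j e) j 1 =
      -((eval (p j) (Qp p j) * (eval (p j) (muF (p j)))^2 * (eval (p j) (mF (p j)))^e) * p j 0) := by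
  rw [Lmap_apply1]
  simp only [G1, ep_mul, ep_pow, map_mul, map_pow, eval_lamF_self, ep_Qp_zero1,
    ep_lamF_1, ep_muF_1, ep_mF_1]
  ring

lemma LG1_2 {N : ℕ} (p : Fin N → Fin 4 → ℂ) (j : Fin N) (e : ℕ) :
    Lmap p (G1 p j e) j 2 = 0 := by
  rw [Lmap_apply2]
  simp only [G1, ep_mul, ep_pow, map_mul, map_pow, eval_lamF_self,
    ep_lamF_2, ep_lamF_3, ep_muF_2, ep_muF_3, ep_mF_2, ep_mF_3]
  ring

lemma LG2_0 {N : ℕ} (p : Fin N → Fin 4 → ℂ) (j : Fin N) (e : ℕ) :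
    Lmap p (G2 p j e) j 0 = 0 := by
  rw [Lmap_apply0]
  simp only [G2, ep_mul, ep_pow, map_mul, map_pow, eval_ellF_self, ep_Qp_zero0,
    ep_ellF_0, ep_muF_0, ep_mF_0]
  ring

lemma LG2_1 {N : ℕ} (p : Fin N → Fin 4 → ℂ) (j : Fin N) (e : ℕ) :
    Lmap p (G2 p j e) j 1 = 0 := by
  rw [Lmap_apply1]
  simp only [G2, ep_mul, ep_pow, map_mul, map_pow, eval_ellF_self, ep_Qp_zero1,
    ep_ellF_1, ep_muF_1, ep_mF_1]
  ring

lemma LG2_2 {N : ℕ} (p : Fin N → Fin 4 → ℂ) (j : Fin N) (e : ℕ) :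
    Lmap p (G2 p j e) j 2 =
      (eval (p j) (Qp p j) * (eval (p j) (muF (p j)))^3 * (eval (p j) (mF (p j)))^(e-1)) *
        (conj (p j 3) * p j 3 + conj (p j 2) * p j 2) := by
  rw [Lmap_apply2]
  simp only [G2, ep_mul, ep_pow, map_mul, map_pow, eval_ellF_self,
    ep_ellF_2, ep_ellF_3, ep_muF_2, ep_muF_3, ep_mF_2, ep_mF_3]
  ring

lemma LG3_0 {N : ℕ} (p : Fin N → Fin 4 → ℂ) (j : Fin N) (e : ℕ) :
    Lmap p (G3 p j e) j 0 =
      3 * (eval (p j) (Qp p j) * (eval (p j) (muF (p j)))^2 * (eval (p j) (mF (p j)))^e) *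
        conj (p j 0) := by
  rw [Lmap_apply0]
  simp only [G3, ep_mul, ep_pow, map_mul, map_pow, ep_Qp_zero0, ep_muF_0, ep_mF_0]
  ring

lemma LG3_1 {N : ℕ} (p : Fin N → Fin 4 → ℂ) (j : Fin N) (e : ℕ) :
    Lmap p (G3 p j e) j 1 =
      3 * (eval (p j) (Qp p j) * (eval (p j) (muF (p j)))^2 * (eval (p j) (mF (p j)))^e) *
        conj (p j 1) := by
  rw [Lmap_apply1]
  simp only [G3, ep_mul, ep_pow, map_mul, map_pow, ep_Qp_zero1, ep_muF_1, ep_mF_1]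
  ring

lemma point_solve {N d : ℕ} (p : Fin N → Fin 4 → ℂ)
    (hpx : ∀ j, (p j 0, p j 1) ≠ ((0:ℂ), (0:ℂ)))
    (hpy : ∀ j, (p j 2, p j 3) ≠ ((0:ℂ), (0:ℂ)))
    (hdist : ∀ j j', j ≠ j' → p j 2 * p j' 3 ≠ p j' 2 * p j 3)
    (e : ℕ) (he1 : 1 ≤ e) (hde : 2*(N-1) + e = d) (j : Fin N) (a b c : ℂ) :
    ∃ f ∈ W d, (∀ j', j' ≠ j → ∀ k, Lmap p f j' k = 0) ∧
      Lmap p f j 0 = a ∧ Lmap p f j 1 = b ∧ Lmap p f j 2 = c := by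
  have hA : eval (p j) (Qp p j) ≠ 0 := eval_Qp_ne p hdist j
  have hU : eval (p j) (muF (p j)) ≠ 0 := by
    rw [eval_muF_self]; exact key_nonzero (hpx j)
  have hM : eval (p j) (mF (p j)) ≠ 0 := by
    rw [eval_mF_self]; exact key_nonzero (hpy j)
  set A := eval (p j) (Qp p j) with hAd
  set U := eval (p j) (muF (p j)) with hUd
  set M := eval (p j) (mF (p j)) with hMd
  set c1 := A * U^2 * M^e with hc1d
  set c2 := A * U^3 * M^(e-1) with hc2d
  have hc1 : c1 ≠ 0 := mul_ne_zero (mul_ne_zero hA (pow_ne_zero _ hU)) (pow_ne_zero _ hM)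
  have hc2 : c2 ≠ 0 := mul_ne_zero (mul_ne_zero hA (pow_ne_zero _ hU)) (pow_ne_zero _ hM)
  set t := Lmap p (G3 p j e) j 2 with htd
  set Dy := conj (p j 3) * p j 3 + conj (p j 2) * p j 2 with hDyd
  have hDy : Dy ≠ 0 := by
    rw [hDyd, add_comm]; exact key_nonzero (hpy j)
  set α := (a * conj (p j 1) - b * conj (p j 0)) / (U * c1) with hα
  set γ := (a * p j 0 + b * p j 1) / (U * (3 * c1)) with hγ
  set β := (c - γ * t) / (c2 * Dy) with hβ
  have hXY : U = conj (p j 0) * p j 0 + conj (p j 1) * p j 1 := by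
    rw [hUd, eval_muF_self]
  refine ⟨α • G1 p j e + β • G2 p j e + γ • G3 p j e, ?_, ?_, ?_, ?_, ?_⟩
  · exact add_mem (add_mem (Submodule.smul_mem _ _ (G1_mem p j e he1 hde))
      (Submodule.smul_mem _ _ (G2_mem p j e he1 hde)))
      (Submodule.smul_mem _ _ (G3_mem p j e he1 hde))
  · intro j' hne k
    rw [Lmap_apply_add, Lmap_apply_add, Lmap_apply_smul, Lmap_apply_smul, Lmap_apply_smul,
      G1, G2, G3, Lmap_QpR_kill p j j' hne _ k, Lmap_QpR_kill p j j' hne _ k,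
      Lmap_QpR_kill p j j' hne _ k]
    ring
  · rw [Lmap_apply_add, Lmap_apply_add, Lmap_apply_smul, Lmap_apply_smul, Lmap_apply_smul,
      LG1_0, LG2_0, LG3_0, ← hAd, ← hUd, ← hMd, ← hc1d, hα, hγ]
    rw [hXY]
    have hD := key_nonzero (hpx j)
    field_simp
    ring
  · rw [Lmap_apply_add, Lmap_apply_add, Lmap_apply_smul, Lmap_apply_smul, Lmap_apply_smul,
      LG1_1, LG2_1, LG3_1, ← hAd, ← hUd, ← hMd, ← hc1d, hα, hγ]
    rw [hXY]
    have hD := key_nonzero (hpx j)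
    field_simp
    ring
  · rw [Lmap_apply_add, Lmap_apply_add, Lmap_apply_smul, Lmap_apply_smul, Lmap_apply_smul,
      LG1_2, LG2_2, ← hAd, ← hUd, ← hMd, ← hc2d, ← hDyd, ← htd, hβ]
    field_simp
    ring

lemma Lmap_surj {N d : ℕ} (hN : 1 ≤ N) (hd : 2*N - 1 ≤ d) (p : Fin N → Fin 4 → ℂ)
    (hpx : ∀ j, (p j 0, p j 1) ≠ ((0:ℂ), (0:ℂ)))
    (hpy : ∀ j, (p j 2, p j 3) ≠ ((0:ℂ), (0:ℂ)))
    (hdist : ∀ j j', j ≠ j' → p j 2 * p j' 3 ≠ p j' 2 * p j 3) :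
    LinearMap.range (Lmap p ∘ₗ (W d).subtype) = ⊤ := by
  rw [LinearMap.range_eq_top]
  intro w
  have he1 : 1 ≤ d - 2*(N-1) := by omega
  have hde : 2*(N-1) + (d - 2*(N-1)) = d := by omega
  choose f hfW hkill h0 h1 h2 using fun j =>
    point_solve p hpx hpy hdist (d - 2*(N-1)) he1 hde j (w j 0) (w j 1) (w j 2)
  refine ⟨⟨∑ j, f j, Submodule.sum_mem _ fun j _ => hfW j⟩, ?_⟩
  funext j k
  show Lmap p (∑ j', f j') j k = w j k
  have hs : Lmap p (∑ j', f j') j k = ∑ j', Lmap p (f j') j k := by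
    rw [map_sum, Finset.sum_apply, Finset.sum_apply]
  rw [hs, Finset.sum_eq_single j
    (fun j' _ hne => hkill j' j (Ne.symm hne) k)
    (fun h => absurd (Finset.mem_univ j) h)]
  fin_cases k
  · exact h0 j
  · exact h1 j
  · exact h2 j

end SingAux

set_option maxHeartbeats 1600000 in
set_option synthInstance.maxHeartbeats 400000 in
/-- For `N ≥ 1`, `d ≥ 2N - 1`, and `N` points of `ℙ¹ × ℙ¹` lying on pairwise distinct lines
of the ruling, the subspace of `W_d` of polynomials singular at all `N` points has dimension
`4(d+1) - 3N`. -/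
theorem finrank_singular_subspace_P1P1 (N d : ℕ) (hN : 1 ≤ N) (hd : 2 * N - 1 ≤ d)
    (p : Fin N → Fin 4 → ℂ)
    (hpx : ∀ j, (p j 0, p j 1) ≠ (0, 0))
    (hpy : ∀ j, (p j 2, p j 3) ≠ (0, 0))
    (hdist : ∀ j j', j ≠ j' → p j 2 * p j' 3 ≠ p j' 2 * p j 3) :
    Module.finrank ℂ ↥(W d ⊓ singSub p) = 4 * (d + 1) - 3 * N := by
  classical
  rw [SingAux.inf_eq d p hpy]
  rw [Submodule.finrank_map_subtype_eq]
  have hrank := LinearMap.finrank_range_add_finrank_ker (SingAux.Lmap p ∘ₗ (W d).subtype)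
  rw [SingAux.Lmap_surj hN hd p hpx hpy hdist, finrank_top] at hrank
  have hpi : Module.finrank ℂ (Fin N → Fin 3 → ℂ) = N * 3 := by
    rw [Module.finrank_pi_fintype]
    simp [Module.finrank_pi]
  rw [hpi, SingAux.finrank_W d] at hrank
  omega

end
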